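/- In the quantum torus with lm = t²ml, for any integers p, q, n, the element c_{p,q}·(e_{n,0} + e_{−n,0}) expands as t^{nq} c_{p+n,q} + t^{−nq} c_{p−n,q}, and consequently the span over ℂ[t,t⁻¹] of the noncommutative cosines {c_{p,q} : p ≥ 0, q ∈ ℤ} is closed under multiplication. -/

import Mathlib

open LaurentPolynomial

/-- Noncommutative exponentials `e_{p,q} = t^{-pq} l^p m^q` in the quantum torus. -/
noncomputable def qe {A : Type*} [Ring A] [Algebra (LaurentPolynomial ℂ) A]
    (l m : Aˣ) (p q : ℤ) : A :=
  algebraMap (LaurentPolynomial ℂ) A (T (-(p * q))) * ((l ^ p * m ^ q : Aˣ) : A)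

/-- Noncommutative cosines `c_{p,q} = e_{p,q} + e_{-p,-q}`. -/
noncomputable def qc {A : Type*} [Ring A] [Algebra (LaurentPolynomial ℂ) A]
    (l m : Aˣ) (p q : ℤ) : A :=
  qe l m p q + qe l m (-p) (-q)

section Aux

/-- One multiplication step for the central-commutation lemma. -/
lemma qt_step {G : Type*} [Group G] {a b u x v : G} (hu : ∀ y, u * y = y * u)
    (hab : a * b = u * (b * a)) (hx : x * b = v * (b * x)) :
    (x * a) * b = (v * u) * (b * (x * a)) := by
  calc (x * a) * b = x * (a * b) := by rw [mul_assoc]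
    _ = x * u * (b * a) := by rw [hab, mul_assoc]
    _ = u * (x * b) * a := by rw [← hu x]; simp [mul_assoc]
    _ = u * (v * (b * x)) * a := by rw [hx]
    _ = (v * u) * (b * (x * a)) := by rw [← hu v]; simp [mul_assoc]

lemma qt_pow_nat {G : Type*} [Group G] {a b u : G} (hu : ∀ y, u * y = y * u)
    (hab : a * b = u * (b * a)) : ∀ n : ℕ, a ^ n * b = u ^ n * (b * a ^ n) := by
  intro n
  induction n with
  | zero => simp
  | succ k ih =>
    rw [pow_succ, pow_succ]
    exact qt_step hu hab ih

lemma qt_inv {G : Type*} [Group G] {a b u : G} (hu : ∀ y, u * y = y * u)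
    (hab : a * b = u * (b * a)) : a⁻¹ * b = u⁻¹ * (b * a⁻¹) := by
  have hba : b * a = u⁻¹ * (a * b) := by rw [hab, ← mul_assoc, inv_mul_cancel, one_mul]
  have hu' : ∀ y, u⁻¹ * y = y * u⁻¹ := fun y => by
    rw [eq_comm, mul_inv_eq_iff_eq_mul, mul_assoc, ← hu y, ← mul_assoc, inv_mul_cancel, one_mul]
  calc a⁻¹ * b = a⁻¹ * (b * a) * a⁻¹ := by simp [mul_assoc]
    _ = a⁻¹ * u⁻¹ * (a * b) * a⁻¹ := by rw [hba]; simp [mul_assoc]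
    _ = u⁻¹ * (a⁻¹ * a) * b * a⁻¹ := by rw [← hu' a⁻¹]; simp [mul_assoc]
    _ = u⁻¹ * (b * a⁻¹) := by simp [mul_assoc]

lemma qt_pow {G : Type*} [Group G] {a b u : G} (hu : ∀ y, u * y = y * u)
    (hab : a * b = u * (b * a)) : ∀ n : ℤ, a ^ n * b = u ^ n * (b * a ^ n) := by
  intro n
  obtain ⟨k, rfl | rfl⟩ := n.eq_nat_or_neg
  · rw [zpow_natCast, zpow_natCast]
    exact qt_pow_nat hu hab k
  · rw [zpow_neg, zpow_neg, zpow_natCast, zpow_natCast, ← inv_pow, ← inv_pow]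
    have hu' : ∀ y, u⁻¹ * y = y * u⁻¹ := fun y => by
      rw [eq_comm, mul_inv_eq_iff_eq_mul, mul_assoc, ← hu y, ← mul_assoc, inv_mul_cancel, one_mul]
    exact qt_pow_nat hu' (qt_inv hu hab) k

variable {A : Type*} [Ring A] [Algebra (LaurentPolynomial ℂ) A]

/-- The unit `T n` of the quantum torus. -/
noncomputable def tU (A : Type*) [Ring A] [Algebra (LaurentPolynomial ℂ) A] (n : ℤ) : Aˣ where
  val := algebraMap (LaurentPolynomial ℂ) A (T n)
  inv := algebraMap (LaurentPolynomial ℂ) A (T (-n))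
  val_inv := by rw [← map_mul, ← T_add, add_neg_cancel, T_zero, map_one]
  inv_val := by rw [← map_mul, ← T_add, neg_add_cancel, T_zero, map_one]

lemma tU_val (n : ℤ) : (tU A n : A) = algebraMap (LaurentPolynomial ℂ) A (T n) := rfl

lemma tU_mul (a b : ℤ) : tU A a * tU A b = tU A (a + b) := by
  ext
  rw [Units.val_mul, tU_val, tU_val, tU_val, ← map_mul, ← T_add]

lemma tU_zero : tU A 0 = 1 := by
  ext
  rw [tU_val, T_zero, map_one, Units.val_one]

lemma tU_comm (n : ℤ) (x : A) : (tU A n : A) * x = x * tU A n :=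
  Algebra.commutes _ _

lemma tU_commU (n : ℤ) (y : Aˣ) : tU A n * y = y * tU A n := by
  ext
  rw [Units.val_mul, Units.val_mul, tU_comm]

lemma tU_zpow (a : ℤ) : ∀ n : ℤ, (tU A a) ^ n = tU A (a * n) := by
  intro n
  induction n using Int.induction_on with
  | zero => rw [mul_zero, zpow_zero, tU_zero]
  | succ k ih => rw [zpow_add_one, ih, tU_mul]; ring_nf
  | pred k ih =>
    rw [zpow_sub_one, ih]
    have : tU A (a * (-(k : ℤ) - 1)) * tU A a = tU A (a * -(k:ℤ)) := by
      rw [tU_mul]; ring_nf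
    rw [← this, mul_assoc, mul_inv_cancel, mul_one]

end Aux

section Main

variable {A : Type*} [Ring A] [Algebra (LaurentPolynomial ℂ) A] (l m : Aˣ)
  (h : (l : A) * m = algebraMap (LaurentPolynomial ℂ) A (T 2) * ((m : A) * l))

include h

lemma qt_comm : ∀ p q : ℤ, (l ^ p * m ^ q : Aˣ) = tU A (2 * p * q) * (m ^ q * l ^ p) := by
  have hU : l * m = tU A 2 * (m * l) := by
    ext
    simpa [Units.val_mul, tU_val] using h
  intro p q
  have h1 : l ^ p * m = (tU A 2) ^ p * (m * l ^ p) := qt_pow (tU_commU 2) hU p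
  -- invert: m * l ^ p = tU A (-(2*p)) * (l ^ p * m)
  have h2 : m * l ^ p = tU A (2 * (-p)) * (l ^ p * m) := by
    rw [h1, tU_zpow, ← mul_assoc, tU_mul]
    have : 2 * -p + 2 * p = 0 := by ring
    rw [this, tU_zero, one_mul]
  have h3 : m ^ q * l ^ p = (tU A (2 * (-p))) ^ q * (l ^ p * m ^ q) :=
    qt_pow (tU_commU _) h2 q
  rw [h3, tU_zpow, ← mul_assoc, ← mul_assoc, tU_mul]
  have : 2 * p * q + 2 * -p * q = 0 := by ring
  rw [this, tU_zero, one_mul]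

lemma qe_mul (p q r s : ℤ) :
    qe l m p q * qe l m r s =
      algebraMap (LaurentPolynomial ℂ) A (T (p * s - q * r)) * qe l m (p + r) (q + s) := by
  have key : (l ^ p * m ^ q) * (l ^ r * m ^ s) = tU A (2 * q * (-r)) * (l ^ (p + r) * m ^ (q + s)) := by
    have hc : m ^ q * l ^ r = tU A (2 * q * (-r)) * (l ^ r * m ^ q) := by
      have := qt_comm l m h r q
      rw [this, ← mul_assoc, tU_mul]
      have e : 2 * q * -r + 2 * r * q = 0 := by ring
      rw [e, tU_zero, one_mul]
    calc (l ^ p * m ^ q) * (l ^ r * m ^ s)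
        = l ^ p * (m ^ q * l ^ r) * m ^ s := by simp [mul_assoc]
      _ = l ^ p * (tU A (2 * q * (-r)) * (l ^ r * m ^ q)) * m ^ s := by rw [hc]
      _ = tU A (2 * q * (-r)) * (l ^ p * l ^ r * (m ^ q * m ^ s)) := by
          rw [← mul_assoc, ← tU_commU]; simp [mul_assoc]
      _ = tU A (2 * q * (-r)) * (l ^ (p + r) * m ^ (q + s)) := by rw [zpow_add, zpow_add]
  have keyA : ((l ^ p * m ^ q : Aˣ) : A) * ((l ^ r * m ^ s : Aˣ) : A) =
      (tU A (2 * q * (-r)) : A) * ((l ^ (p + r) * m ^ (q + s) : Aˣ) : A) := by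
    rw [← Units.val_mul, key, Units.val_mul]
  rw [qe, qe, qe]
  calc algebraMap (LaurentPolynomial ℂ) A (T (-(p * q))) * ((l ^ p * m ^ q : Aˣ) : A) *
        (algebraMap (LaurentPolynomial ℂ) A (T (-(r * s))) * ((l ^ r * m ^ s : Aˣ) : A))
      = algebraMap (LaurentPolynomial ℂ) A (T (-(p * q))) *
          (algebraMap (LaurentPolynomial ℂ) A (T (-(r * s))) *
            (((l ^ p * m ^ q : Aˣ) : A) * ((l ^ r * m ^ s : Aˣ) : A))) := by
        rw [mul_assoc, ← mul_assoc ((l ^ p * m ^ q : Aˣ) : A), ← Algebra.commutes, mul_assoc]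
    _ = algebraMap (LaurentPolynomial ℂ) A (T (-(p*q) + -(r*s) + 2 * q * (-r) + (p * s - q * r) - (p * s - q * r))) *
          ((l ^ (p + r) * m ^ (q + s) : Aˣ) : A) := by
        rw [keyA, tU_val]
        rw [← mul_assoc, ← mul_assoc, ← map_mul, ← map_mul, ← T_add, ← T_add]
        ring_nf
    _ = algebraMap (LaurentPolynomial ℂ) A (T (p * s - q * r)) *
          (algebraMap (LaurentPolynomial ℂ) A (T (-((p + r) * (q + s)))) *
            ((l ^ (p + r) * m ^ (q + s) : Aˣ) : A)) := by
        rw [← mul_assoc, ← map_mul, ← T_add]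
        congr 2
        ring_nf

end Main

/-- In the quantum torus, the noncommutative cosines satisfy the product-to-sum
formula, and consequently the `ℂ[t,t⁻¹]`-span of the cosines `c_{p,q}` with
`p ≥ 0` is closed under multiplication. -/
theorem quantum_torus_cos_span_mul_closed {A : Type*} [Ring A]
    [Algebra (LaurentPolynomial ℂ) A] (l m : Aˣ)
    (h : (l : A) * m = algebraMap (LaurentPolynomial ℂ) A (T 2) * ((m : A) * l)) :
    (∀ p q r s : ℤ,
      qc l m p q * qc l m r s =
        algebraMap (LaurentPolynomial ℂ) A (T (p * s - q * r)) * qc l m (p + r) (q + s) +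
          algebraMap (LaurentPolynomial ℂ) A (T (q * r - p * s)) * qc l m (p - r) (q - s)) ∧
    (∀ x y : A,
      x ∈ Submodule.span (LaurentPolynomial ℂ) {z : A | ∃ p q : ℤ, 0 ≤ p ∧ z = qc l m p q} →
      y ∈ Submodule.span (LaurentPolynomial ℂ) {z : A | ∃ p q : ℤ, 0 ≤ p ∧ z = qc l m p q} →
      x * y ∈ Submodule.span (LaurentPolynomial ℂ) {z : A | ∃ p q : ℤ, 0 ≤ p ∧ z = qc l m p q}) := by
  have prod : ∀ p q r s : ℤ,
      qc l m p q * qc l m r s =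
        algebraMap (LaurentPolynomial ℂ) A (T (p * s - q * r)) * qc l m (p + r) (q + s) +
          algebraMap (LaurentPolynomial ℂ) A (T (q * r - p * s)) * qc l m (p - r) (q - s) := by
    intro p q r s
    rw [qc, qc, add_mul, mul_add, mul_add, qe_mul l m h, qe_mul l m h, qe_mul l m h,
      qe_mul l m h]
    rw [show qc l m (p + r) (q + s) = qe l m (p + r) (q + s) + qe l m (-(p+r)) (-(q+s)) from rfl,
      show qc l m (p - r) (q - s) = qe l m (p - r) (q - s) + qe l m (-(p-r)) (-(q-s)) from rfl]
    rw [mul_add, mul_add]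
    rw [show p * -s - q * -r = q * r - p * s from by ring,
      show -p * s - -q * r = q * r - p * s from by ring,
      show -p * -s - -q * -r = p * s - q * r from by ring,
      show p + -r = p - r from by ring,
      show q + -s = q - s from by ring,
      show -p + r = -(p - r) from by ring,
      show -q + s = -(q - s) from by ring,
      show -p + -r = -(p + r) from by ring,
      show -q + -s = -(q + s) from by ring]
    abel
  refine ⟨prod, ?_⟩
  set S : Set A := {z : A | ∃ p q : ℤ, 0 ≤ p ∧ z = qc l m p q} with hS
  have qc_neg : ∀ p q : ℤ, qc l m (-p) (-q) = qc l m p q := by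
    intro p q
    rw [qc, qc, neg_neg, neg_neg, add_comm]
  have qc_mem : ∀ p q : ℤ, qc l m p q ∈ Submodule.span (LaurentPolynomial ℂ) S := by
    intro p q
    rcases le_or_gt 0 p with hp | hp
    · exact Submodule.subset_span ⟨p, q, hp, rfl⟩
    · rw [← qc_neg]
      exact Submodule.subset_span ⟨-p, -q, by omega, rfl⟩
  have gen : ∀ p q r s : ℤ, qc l m p q * qc l m r s ∈ Submodule.span (LaurentPolynomial ℂ) S := by
    intro p q r s
    rw [prod p q r s, ← Algebra.smul_def, ← Algebra.smul_def]
    exact Submodule.add_mem _ (Submodule.smul_mem _ _ (qc_mem _ _))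
      (Submodule.smul_mem _ _ (qc_mem _ _))
  intro x y hx hy
  induction hx using Submodule.span_induction with
  | mem z hz =>
    induction hy using Submodule.span_induction with
    | mem w hw =>
      obtain ⟨p, q, hp, rfl⟩ := hz
      obtain ⟨r, s, hr, rfl⟩ := hw
      exact gen p q r s
    | zero => simp
    | add a b _ _ ha hb => rw [mul_add]; exact Submodule.add_mem _ ha hb
    | smul c a _ ih => rw [mul_smul_comm]; exact Submodule.smul_mem _ _ ih
  | zero => simp
  | add a b _ _ ha hb => rw [add_mul]; exact Submodule.add_mem _ ha hb
  | smul c a _ ih => rw [smul_mul_assoc]; exact Submodule.smul_mem _ _ ih
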